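/- Fix τ ≥ 2, coefficients ξ_1, …, ξ_{τ-1} ∈ ℝ, and points x^{(k+1)}, …, x^{(k+τ)} ∈ ℝⁿ. Then ‖Σ_{i=1}^{τ-1} ξ_i (x^{(k+i)} − x^{(k+τ)})‖² ≤ (τ−1) · Σ_{j=1}^{τ-1} (Σ_{i=1}^{j} (τ−i) ξ_i²) · ‖x^{(k+j)} − x^{(k+j+1)}‖². -/

import Mathlib

open Finset

lemma aux_sq {E : Type*} [SeminormedAddCommGroup E] (s : Finset ℕ) (f : ℕ → E) :
    ‖∑ i ∈ s, f i‖ ^ 2 ≤ (s.card : ℝ) * ∑ i ∈ s, ‖f i‖ ^ 2 := by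
  calc ‖∑ i ∈ s, f i‖ ^ 2 ≤ (∑ i ∈ s, ‖f i‖) ^ 2 := by
        apply pow_le_pow_left₀ (norm_nonneg _) (norm_sum_le _ _)
    _ ≤ (s.card : ℝ) * ∑ i ∈ s, ‖f i‖ ^ 2 :=
        sq_sum_le_card_mul_sum_sq (s := s) (f := fun i => ‖f i‖)

lemma aux_tel {E : Type*} [AddCommGroup E] (x : ℕ → E) (k i τ : ℕ) (h : i ≤ τ) (h1 : 1 ≤ τ) :
    ∑ j ∈ Finset.Icc i (τ - 1), (x (k + j) - x (k + j + 1)) = x (k + i) - x (k + τ) := by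
  have hs : Finset.Icc i (τ - 1) = Finset.Ico i τ := by
    rw [← Finset.Ico_add_one_right_eq_Icc]; congr 1; omega
  rw [hs, Finset.sum_Ico_eq_sum_range]
  calc ∑ j ∈ Finset.range (τ - i), (x (k + (i + j)) - x (k + (i + j) + 1))
      = ∑ j ∈ Finset.range (τ - i),
          ((fun j => x (k + i + j)) j - (fun j => x (k + i + j)) (j + 1)) := by
        refine Finset.sum_congr rfl fun j _ => ?_
        simp only []
        congr 2 <;> omega
    _ = x (k + i + 0) - x (k + i + (τ - i)) := Finset.sum_range_sub' _ _
    _ = x (k + i) - x (k + τ) := by congr 2 <;> omega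

theorem stmt12 (n : ℕ) (τ : ℕ) (hτ : 2 ≤ τ) (ξ : ℕ → ℝ)
    (x : ℕ → EuclideanSpace ℝ (Fin n)) (k : ℕ) :
    ‖∑ i ∈ Finset.Icc 1 (τ - 1), ξ i • (x (k + i) - x (k + τ))‖ ^ 2 ≤
      ((τ : ℝ) - 1) * ∑ j ∈ Finset.Icc 1 (τ - 1),
        (∑ i ∈ Finset.Icc 1 j, ((τ : ℝ) - i) * ξ i ^ 2) *
          ‖x (k + j) - x (k + j + 1)‖ ^ 2 := by
  have hcard : ((Finset.Icc 1 (τ - 1)).card : ℝ) = (τ : ℝ) - 1 := by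
    rw [Nat.card_Icc]
    have h2 : τ - 1 + 1 - 1 = τ - 1 := by omega
    rw [h2, Nat.cast_sub (by omega)]
    norm_num
  calc ‖∑ i ∈ Finset.Icc 1 (τ - 1), ξ i • (x (k + i) - x (k + τ))‖ ^ 2
      ≤ ((Finset.Icc 1 (τ - 1)).card : ℝ) *
          ∑ i ∈ Finset.Icc 1 (τ - 1), ‖ξ i • (x (k + i) - x (k + τ))‖ ^ 2 :=
        aux_sq _ _
    _ = ((τ : ℝ) - 1) *
          ∑ i ∈ Finset.Icc 1 (τ - 1), ξ i ^ 2 * ‖x (k + i) - x (k + τ)‖ ^ 2 := by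
        rw [hcard]
        congr 1
        refine Finset.sum_congr rfl fun i _ => ?_
        rw [norm_smul, mul_pow, Real.norm_eq_abs, sq_abs]
    _ ≤ ((τ : ℝ) - 1) * ∑ i ∈ Finset.Icc 1 (τ - 1),
          ξ i ^ 2 * (((τ : ℝ) - i) *
            ∑ j ∈ Finset.Icc i (τ - 1), ‖x (k + j) - x (k + j + 1)‖ ^ 2) := by
        apply mul_le_mul_of_nonneg_left _ (by
          have : (1:ℝ) ≤ (τ:ℝ) := by exact_mod_cast Nat.one_le_of_lt hτ
          linarith)
        apply Finset.sum_le_sum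
        intro i hi
        apply mul_le_mul_of_nonneg_left _ (sq_nonneg _)
        rw [Finset.mem_Icc] at hi
        have h1 : i ≤ τ := by omega
        have hc : ((Finset.Icc i (τ - 1)).card : ℝ) = (τ : ℝ) - i := by
          rw [Nat.card_Icc]
          have h2 : τ - 1 + 1 - i = τ - i := by omega
          rw [h2, Nat.cast_sub (by omega)]
        calc ‖x (k + i) - x (k + τ)‖ ^ 2
            = ‖∑ j ∈ Finset.Icc i (τ - 1), (x (k + j) - x (k + j + 1))‖ ^ 2 := by
              rw [aux_tel x k i τ h1 (by omega)]
          _ ≤ ((τ : ℝ) - i) * ∑ j ∈ Finset.Icc i (τ - 1),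
                ‖x (k + j) - x (k + j + 1)‖ ^ 2 := by
              rw [← hc]; exact aux_sq _ _
    _ = ((τ : ℝ) - 1) * ∑ j ∈ Finset.Icc 1 (τ - 1),
          (∑ i ∈ Finset.Icc 1 j, ((τ : ℝ) - i) * ξ i ^ 2) *
            ‖x (k + j) - x (k + j + 1)‖ ^ 2 := by
        congr 1
        have key := Finset.sum_Ico_Ico_comm 1 τ
          (fun i j => ((τ : ℝ) - i) * ξ i ^ 2 * ‖x (k + j) - x (k + j + 1)‖ ^ 2)
        have hIco : Finset.Ico 1 τ = Finset.Icc 1 (τ - 1) := by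
          rw [← Finset.Ico_add_one_right_eq_Icc]; congr 1; omega
        simp only [hIco, Finset.Ico_add_one_right_eq_Icc] at key
        refine Eq.trans ?_ (Eq.trans key ?_)
        · refine Finset.sum_congr rfl fun i hi => ?_
          rw [Finset.mem_Icc] at hi
          have hIco2 : Finset.Ico i τ = Finset.Icc i (τ - 1) := by
            rw [← Finset.Ico_add_one_right_eq_Icc]; congr 1; omega
          rw [hIco2, Finset.mul_sum, Finset.mul_sum]
          refine Finset.sum_congr rfl fun j _ => ?_
          ring
        · refine Finset.sum_congr rfl fun j _ => ?_
          rw [Finset.sum_mul]
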